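/- Let T be a finite tree with at least one edge, let X ⊆ V(T) be a set containing every leaf of T, let Δ be an integer, and let B ⊆ V(T) be a set of vertices each of degree at least Δ − 1 in T. Let c be the number of connected components of the forest obtained from T by deleting the vertices of B that contain at least one vertex of X. Then c > |B|·(Δ − 3)/2. -/

import Mathlib

/-- `Γ` is (the vertex set of) a connected component of the subgraph of `G`
induced on `A`: it is a nonempty subset of `A`, connected in the induced sense,
and closed under adjacency within `A`. -/
def IsCompOf {V : Type*} (G : SimpleGraph V) (A Γ : Set V) : Prop :=
  Γ ⊆ A ∧ Γ.Nonempty ∧ (G.induce Γ).Connected ∧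
    ∀ u ∈ Γ, ∀ v ∈ A, G.Adj u v → v ∈ Γ

/-- `compCount G B X` is the number of connected components of the forest
obtained by deleting the vertices of `B` from `G` that contain a vertex
of `X`. -/
noncomputable def compCount {V : Type*} (G : SimpleGraph V) (B X : Set V) : ℕ :=
  {Γ : Set V | IsCompOf G Bᶜ Γ ∧ (Γ ∩ X).Nonempty}.ncard

open SimpleGraph
attribute [local instance 1] Classical.propDecidable

section Helpers

lemma reachable_induce_of_walk {V : Type*} (G : SimpleGraph V) (Γ : Set V) :
    ∀ {u w : V} (p : G.Walk u w) (hp : ∀ x ∈ p.support, x ∈ Γ),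
    (G.induce Γ).Reachable ⟨u, hp u p.start_mem_support⟩ ⟨w, hp w p.end_mem_support⟩
  | _, _, SimpleGraph.Walk.nil, _ => Reachable.refl _
  | u, _, SimpleGraph.Walk.cons h q, hp => by
      have hq : ∀ x ∈ q.support, x ∈ Γ := fun x hx => hp x (by simp [hx])
      have h1 : (G.induce Γ).Adj ⟨u, hp u (Walk.cons h q).start_mem_support⟩
          ⟨_, hq _ q.start_mem_support⟩ := h
      exact h1.reachable.trans (reachable_induce_of_walk G Γ q hq)

lemma mem_of_walk_closed {V : Type*} (G : SimpleGraph V) (A Γ : Set V)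
    (hcl : ∀ u ∈ Γ, ∀ v ∈ A, G.Adj u v → v ∈ Γ) :
    ∀ {u w : A} (_ : (G.induce A).Walk u w), (u : V) ∈ Γ → (w : V) ∈ Γ
  | _, _, SimpleGraph.Walk.nil, hu => hu
  | u, _, SimpleGraph.Walk.cons h q, hu =>
      mem_of_walk_closed G A Γ hcl q (hcl u hu _ (Subtype.coe_prop _) h)

/-- The component of `v` in the induced subgraph on `A`, as a subset of `V`. -/
def comp {V : Type*} (G : SimpleGraph V) (A : Set V) (v : A) : Set V :=
  {w | ∃ h : w ∈ A, (G.induce A).Reachable v ⟨w, h⟩}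

lemma self_mem_comp {V : Type*} (G : SimpleGraph V) (A : Set V) (v : A) :
    (v : V) ∈ comp G A v := ⟨v.2, by exact Reachable.refl _⟩

lemma comp_isCompOf {V : Type*} (G : SimpleGraph V) (A : Set V) (v : A) :
    IsCompOf G A (comp G A v) := by
  classical
  refine ⟨fun w hw => hw.1, ⟨v, self_mem_comp G A v⟩, ?_, ?_⟩
  · rw [connected_iff]
    refine ⟨?_, ⟨⟨v, self_mem_comp G A v⟩⟩⟩
    rintro ⟨u, hu⟩ ⟨w, hw⟩
    obtain ⟨hu', ru⟩ := hu
    obtain ⟨hw', rw⟩ := hw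
    obtain ⟨p⟩ := (ru.symm.trans rw)
    have hsupp : ∀ x ∈ (p.map (Embedding.induce A).toHom).support, x ∈ comp G A v := by
      intro x hx
      rw [Walk.support_map] at hx
      obtain ⟨y, hy, rfl⟩ := List.mem_map.mp hx
      exact ⟨y.2, ru.trans ⟨p.takeUntil y hy⟩⟩
    have := reachable_induce_of_walk G (comp G A v) (p.map (Embedding.induce A).toHom) hsupp
    convert this using 2 <;> rfl
  · rintro u ⟨huA, hur⟩ w hwA hadj
    exact ⟨hwA, hur.trans (Adj.reachable (by exact hadj : (G.induce A).Adj ⟨u, huA⟩ ⟨w, hwA⟩))⟩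

lemma IsCompOf.eq_comp {V : Type*} {G : SimpleGraph V} {A Γ : Set V}
    (hΓ : IsCompOf G A Γ) {v : V} (hv : v ∈ Γ) :
    Γ = comp G A ⟨v, hΓ.1 hv⟩ := by
  obtain ⟨hsub, hne, hconn, hcl⟩ := hΓ
  apply Set.Subset.antisymm
  · intro u hu
    obtain ⟨p⟩ := hconn.preconnected ⟨v, hv⟩ ⟨u, hu⟩
    have hsupp : ∀ x ∈ (p.map (Embedding.induce Γ).toHom).support, x ∈ A := by
      intro x hx
      rw [Walk.support_map] at hx
      obtain ⟨y, hy, rfl⟩ := List.mem_map.mp hx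
      exact hsub y.2
    exact ⟨hsub hu, reachable_induce_of_walk G A (p.map (Embedding.induce Γ).toHom) hsupp⟩
  · rintro u ⟨huA, hur⟩
    obtain ⟨p⟩ := hur
    exact mem_of_walk_closed G A Γ hcl p hv

end Helpers

section TreePart
variable {V : Type} [Fintype V] {T : SimpleGraph V}

lemma induce_isTree_of_comp (hT : T.IsTree) {A Γ : Set V} (hΓ : IsCompOf T A Γ) :
    (T.induce Γ).IsTree := by
  refine ⟨hΓ.2.2.1, ?_⟩
  intro v c hc
  exact hT.IsAcyclic (c.map (Embedding.induce (G := T) Γ).toHom)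
    ((Walk.map_isCycle_iff_of_injective (Embedding.induce (G := T) Γ).injective).2 hc)

lemma ncard_neighborSet_eq_degree (G : SimpleGraph V) [DecidableRel G.Adj] (v : V) :
    (G.neighborSet v).ncard = G.degree v := by
  rw [← card_neighborSet_eq_degree, Set.ncard_eq_toFinset_card', Set.toFinset_card]

lemma induced_deg {Γ : Set V} (v : V) (hv : v ∈ Γ) :
    ((T.induce Γ).neighborSet ⟨v, hv⟩).ncard = (T.neighborSet v ∩ Γ).ncard := by
  have himg : T.neighborSet v ∩ Γ = Subtype.val '' ((T.induce Γ).neighborSet ⟨v, hv⟩) := by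
    ext w
    constructor
    · rintro ⟨hw1, hw2⟩
      exact ⟨⟨w, hw2⟩, by exact hw1, rfl⟩
    · rintro ⟨⟨w', hw'⟩, hadj, rfl⟩
      exact ⟨hadj, hw'⟩
  rw [himg, Set.ncard_image_of_injective _ Subtype.val_injective]

lemma neighbor_decomp {B Γ : Set V} (hΓ : IsCompOf T Bᶜ Γ) {v : V} (hv : v ∈ Γ) :
    (T.neighborSet v).ncard
      = (T.neighborSet v ∩ Γ).ncard + (T.neighborSet v ∩ B).ncard := by
  have hset : T.neighborSet v = (T.neighborSet v ∩ Γ) ∪ (T.neighborSet v ∩ B) := by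
    ext w
    constructor
    · intro hw
      by_cases hwB : w ∈ B
      · exact Or.inr ⟨hw, hwB⟩
      · exact Or.inl ⟨hw, hΓ.2.2.2 v hv w hwB hw⟩
    · rintro (⟨hw, _⟩ | ⟨hw, _⟩) <;> exact hw
  have hdisj : Disjoint (T.neighborSet v ∩ Γ) (T.neighborSet v ∩ B) := by
    refine Set.disjoint_left.2 ?_
    rintro w ⟨_, hwΓ⟩ ⟨_, hwB⟩
    exact hΓ.1 hwΓ hwB
  conv_lhs => rw [hset]
  exact Set.ncard_union_eq hdisj (Set.toFinite _) (Set.toFinite _)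

lemma comp_sum (hT : T.IsTree) {B Γ : Set V} (hΓ : IsCompOf T Bᶜ Γ) :
    (∑ v ∈ Γ.toFinset, (T.neighborSet v).ncard) + 2
      = 2 * Γ.ncard + ∑ v ∈ Γ.toFinset, (T.neighborSet v ∩ B).ncard := by
  classical
  have htree := induce_isTree_of_comp hT hΓ
  have h1 : ∑ v ∈ Γ.toFinset, (T.neighborSet v).ncard
      = (∑ v ∈ Γ.toFinset, (T.neighborSet v ∩ Γ).ncard)
        + ∑ v ∈ Γ.toFinset, (T.neighborSet v ∩ B).ncard := by
    rw [← Finset.sum_add_distrib]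
    refine Finset.sum_congr rfl fun v hv => ?_
    exact neighbor_decomp hΓ (Set.mem_toFinset.1 hv)
  have h2 : ∑ v ∈ Γ.toFinset, (T.neighborSet v ∩ Γ).ncard
      = ∑ x : Γ, ((T.induce Γ).neighborSet x).ncard := by
    rw [Finset.sum_subtype Γ.toFinset (fun x => Set.mem_toFinset)
      (fun v => (T.neighborSet v ∩ Γ).ncard)]
    exact Finset.sum_congr rfl fun x _ => (induced_deg x.1 x.2).symm
  have h3 : ∑ x : Γ, ((T.induce Γ).neighborSet x).ncard
      = 2 * (T.induce Γ).edgeFinset.card := by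
    rw [← sum_degrees_eq_twice_card_edges]
    exact Finset.sum_congr rfl fun x _ => ncard_neighborSet_eq_degree _ x
  have h4 : (T.induce Γ).edgeFinset.card + 1 = Fintype.card Γ := htree.card_edgeFinset
  have h5 : Fintype.card Γ = Γ.ncard := by
    rw [Set.ncard_eq_toFinset_card', Set.toFinset_card]
  omega

lemma cross_two (hT : T.IsTree) {B Γ : Set V} (hΓ : IsCompOf T Bᶜ Γ)
    (hdeg : ∀ v ∈ Γ, 2 ≤ (T.neighborSet v).ncard) :
    2 ≤ ∑ v ∈ Γ.toFinset, (T.neighborSet v ∩ B).ncard := by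
  classical
  have h1 := comp_sum hT hΓ
  have h2 : 2 * Γ.ncard ≤ ∑ v ∈ Γ.toFinset, (T.neighborSet v).ncard := by
    calc 2 * Γ.ncard = ∑ _v ∈ Γ.toFinset, 2 := by
          rw [Finset.sum_const, Set.ncard_eq_toFinset_card', smul_eq_mul, mul_comm]
      _ ≤ _ := Finset.sum_le_sum fun v hv => hdeg v (Set.mem_toFinset.1 hv)
  omega

lemma one_le_deg (hT : T.Connected) (h2 : 2 ≤ Fintype.card V) (v : V) :
    1 ≤ (T.neighborSet v).ncard := by
  obtain ⟨u, hu⟩ := Fintype.exists_ne_of_one_lt_card (by omega) v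
  obtain ⟨p⟩ := hT.preconnected v u
  rw [Nat.one_le_iff_ne_zero, Ne, Set.ncard_eq_zero (Set.toFinite _), ← Ne,
    ← Set.nonempty_iff_ne_empty]
  cases p with
  | nil => exact absurd rfl hu
  | cons h q => exact ⟨_, h⟩

end TreePart

/-- In a finite tree `T` with at least one edge, if `X`
contains all leaves and every vertex of `B` has degree at least `Δ − 1`, then
the number `c` of components of `T − B` containing a vertex of `X` satisfies
`c > |B|·(Δ − 3)/2`. -/
theorem stmt_10 (V : Type) [Fintype V] (T : SimpleGraph V)
    (hT : T.IsTree) (hE : T.edgeSet.Nonempty)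
    (X : Set V) (hX : ∀ v, (T.neighborSet v).ncard = 1 → v ∈ X)
    (Δ : ℤ) (B : Set V)
    (hB : ∀ v ∈ B, (Δ : ℝ) - 1 ≤ ((T.neighborSet v).ncard : ℝ)) :
    (B.ncard : ℝ) * ((Δ : ℝ) - 3) / 2 < (compCount T B X : ℝ) := by
  classical
  -- basic degree facts
  have hn2 : 2 ≤ Fintype.card V := by
    obtain ⟨e, he⟩ := hE
    induction e using Sym2.ind with
    | _ u w =>
      rw [mem_edgeSet] at he
      exact Fintype.one_lt_card_iff_nontrivial.2 ⟨u, w, he.ne⟩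
  have hdeg1 : ∀ v, 1 ≤ (T.neighborSet v).ncard := one_le_deg hT.isConnected hn2
  have hdeg2 : ∀ v, v ∉ X → 2 ≤ (T.neighborSet v).ncard := by
    intro v hv
    have h1 := hdeg1 v
    have h2 : (T.neighborSet v).ncard ≠ 1 := fun h => hv (hX v h)
    omega
  -- the components
  set K : Finset (Set V) := Set.toFinset {Γ | IsCompOf T Bᶜ Γ} with hK
  have hmemK : ∀ {Γ : Set V}, Γ ∈ K ↔ IsCompOf T Bᶜ Γ := by
    intro Γ; rw [hK, Set.mem_toFinset]; rfl
  have hcover : Bᶜ.toFinset = K.biUnion (fun Γ => Γ.toFinset) := by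
    ext v
    simp only [Finset.mem_biUnion, Set.mem_toFinset]
    constructor
    · intro hv
      exact ⟨comp T Bᶜ ⟨v, hv⟩, hmemK.2 (comp_isCompOf T Bᶜ ⟨v, hv⟩),
        self_mem_comp T Bᶜ ⟨v, hv⟩⟩
    · rintro ⟨Γ, hΓ, hvΓ⟩
      exact (hmemK.1 hΓ).1 hvΓ
  have hdisjK : (K : Set (Set V)).PairwiseDisjoint (fun Γ => Γ.toFinset) := by
    intro Γ₁ h₁ Γ₂ h₂ hne
    refine Finset.disjoint_left.2 fun v hv₁ hv₂ => hne ?_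
    have e₁ := (hmemK.1 (Finset.mem_coe.1 h₁)).eq_comp (Set.mem_toFinset.1 hv₁)
    have e₂ := (hmemK.1 (Finset.mem_coe.1 h₂)).eq_comp (Set.mem_toFinset.1 hv₂)
    exact e₁.trans e₂.symm
  have hsum : ∀ f : V → ℕ,
      ∑ v ∈ Bᶜ.toFinset, f v = ∑ Γ ∈ K, ∑ v ∈ Γ.toFinset, f v := by
    intro f
    rw [hcover, Finset.sum_biUnion hdisjK]
  -- component count sum
  have hcardsum : ∑ Γ ∈ K, Γ.ncard = Bᶜ.ncard := by
    rw [Set.ncard_eq_toFinset_card', hcover, Finset.card_biUnion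
      (fun Γ₁ h₁ Γ₂ h₂ hne => hdisjK h₁ h₂ hne)]
    exact Finset.sum_congr rfl fun Γ _ => Set.ncard_eq_toFinset_card' Γ
  -- main per-component identity, summed
  have hmain : (∑ v ∈ Bᶜ.toFinset, (T.neighborSet v).ncard) + 2 * K.card
      = 2 * Bᶜ.ncard + ∑ v ∈ Bᶜ.toFinset, (T.neighborSet v ∩ B).ncard := by
    rw [hsum (fun v => (T.neighborSet v).ncard),
      hsum (fun v => (T.neighborSet v ∩ B).ncard), ← hcardsum, Finset.mul_sum,
      ← Finset.sum_add_distrib]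
    rw [show 2 * K.card = ∑ _Γ ∈ K, 2 by rw [Finset.sum_const, smul_eq_mul, mul_comm],
      ← Finset.sum_add_distrib]
    exact Finset.sum_congr rfl fun Γ hΓ => comp_sum hT (hmemK.1 hΓ)
  -- compCount as a filter card
  have hcX : compCount T B X = (K.filter (fun Γ => (Γ ∩ X).Nonempty)).card := by
    rw [compCount, Set.ncard_eq_toFinset_card']
    congr 1
    ext Γ
    constructor
    · intro h
      rcases Set.mem_toFinset.1 h with ⟨h1, h2⟩
      exact Finset.mem_filter.2 ⟨hmemK.2 h1, h2⟩
    · intro h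
      rcases Finset.mem_filter.1 h with ⟨h1, h2⟩
      exact Set.mem_toFinset.2 ⟨hmemK.1 h1, h2⟩
  -- cross edges bound for X-free components
  have hfree : 2 * K.card ≤ (∑ v ∈ Bᶜ.toFinset, (T.neighborSet v ∩ B).ncard)
      + 2 * compCount T B X := by
    have hsplit := Finset.card_filter_add_card_filter_not
      (s := K) (p := fun Γ => (Γ ∩ X).Nonempty)
    have hb : 2 * (K.filter (fun Γ => ¬(Γ ∩ X).Nonempty)).card
        ≤ ∑ v ∈ Bᶜ.toFinset, (T.neighborSet v ∩ B).ncard := by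
      rw [hsum (fun v => (T.neighborSet v ∩ B).ncard)]
      calc 2 * (K.filter (fun Γ => ¬(Γ ∩ X).Nonempty)).card
          = ∑ _Γ ∈ K.filter (fun Γ => ¬(Γ ∩ X).Nonempty), 2 := by
            rw [Finset.sum_const, smul_eq_mul, mul_comm]
        _ ≤ ∑ Γ ∈ K.filter (fun Γ => ¬(Γ ∩ X).Nonempty),
              ∑ v ∈ Γ.toFinset, (T.neighborSet v ∩ B).ncard := by
            refine Finset.sum_le_sum fun Γ hΓ => ?_
            obtain ⟨hΓK, hΓX⟩ := Finset.mem_filter.1 hΓ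
            refine cross_two hT (hmemK.1 hΓK) fun v hv => hdeg2 v fun hvX => ?_
            exact hΓX ⟨v, hv, hvX⟩
        _ ≤ ∑ Γ ∈ K, ∑ v ∈ Γ.toFinset, (T.neighborSet v ∩ B).ncard :=
            Finset.sum_le_sum_of_subset (Finset.filter_subset _ _)
    omega
  -- the key natural-number inequality
  have hkey : 2 * Bᶜ.ncard ≤ (∑ v ∈ Bᶜ.toFinset, (T.neighborSet v).ncard)
      + 2 * compCount T B X := by omega
  -- global handshake
  have hHS : (∑ v, (T.neighborSet v).ncard) + 2 = 2 * Fintype.card V := by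
    have h1 : ∑ v, (T.neighborSet v).ncard = ∑ v, T.degree v :=
      Finset.sum_congr rfl fun v _ => ncard_neighborSet_eq_degree T v
    rw [h1, sum_degrees_eq_twice_card_edges, ← hT.card_edgeFinset]
    ring
  have hsplitB : (∑ v ∈ B.toFinset, (T.neighborSet v).ncard)
      + ∑ v ∈ Bᶜ.toFinset, (T.neighborSet v).ncard = ∑ v, (T.neighborSet v).ncard := by
    rw [Set.toFinset_compl]
    exact Finset.sum_add_sum_compl B.toFinset _
  have hBm : B.ncard + Bᶜ.ncard = Fintype.card V := by
    rw [Set.ncard_add_ncard_compl, Nat.card_eq_fintype_card]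
  -- degree lower bound on B, in ℝ
  have hSB : (B.ncard : ℝ) * ((Δ : ℝ) - 1)
      ≤ ((∑ v ∈ B.toFinset, (T.neighborSet v).ncard : ℕ) : ℝ) := by
    push_cast
    calc (B.ncard : ℝ) * ((Δ : ℝ) - 1)
        = ∑ _v ∈ B.toFinset, ((Δ : ℝ) - 1) := by
          rw [Finset.sum_const, Set.ncard_eq_toFinset_card', nsmul_eq_mul, mul_comm]
      _ ≤ ∑ v ∈ B.toFinset, ((T.neighborSet v).ncard : ℝ) :=
          Finset.sum_le_sum fun v hv => hB v (Set.mem_toFinset.1 hv)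
  -- cast everything to ℝ and finish
  have f1 : 2 * (Bᶜ.ncard : ℝ) ≤ ((∑ v ∈ Bᶜ.toFinset, (T.neighborSet v).ncard : ℕ) : ℝ)
      + 2 * (compCount T B X : ℝ) := by exact_mod_cast hkey
  have f2 : ((∑ v ∈ B.toFinset, (T.neighborSet v).ncard : ℕ) : ℝ)
      + ((∑ v ∈ Bᶜ.toFinset, (T.neighborSet v).ncard : ℕ) : ℝ) + 2
      = 2 * (Fintype.card V : ℝ) := by
    have f2n : (∑ v ∈ B.toFinset, (T.neighborSet v).ncard)
        + (∑ v ∈ Bᶜ.toFinset, (T.neighborSet v).ncard) + 2 = 2 * Fintype.card V := by omega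
    exact_mod_cast f2n
  have f3 : (B.ncard : ℝ) + (Bᶜ.ncard : ℝ) = (Fintype.card V : ℝ) := by exact_mod_cast hBm
  linarith
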